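/- The least common multiple of 1, 2, …, n satisfies log lcm(1,…,n) = O(n); equivalently, there is a constant C such that lcm(1,…,n) ≤ C^n for all n ≥ 1. -/

import Mathlib

open Finset

lemma key (n : ℕ) (hn : 1 ≤ n) :
    ((Finset.Icc 1 n).lcm id : ℕ) ≤ 16 ^ n := by
  set P : ℕ := ∏ p ∈ (range (n+1)).filter Nat.Prime, p ^ Nat.log p n with hP
  have hPpos : 0 < P := Finset.prod_pos (by
    intro p hp
    exact pow_pos (Nat.Prime.pos (mem_filter.mp hp).2) _)
  -- every k in [1,n] divides P
  have hdvd : ∀ k ∈ Finset.Icc 1 n, k ∣ P := by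
    intro k hk
    rw [mem_Icc] at hk
    have hk0 : k ≠ 0 := by omega
    rw [← Nat.factorization_le_iff_dvd hk0 hPpos.ne']
    intro p
    by_cases hp : p.Prime
    · by_cases hpk : p ∣ k
      · have hmem : p ∈ (range (n+1)).filter Nat.Prime := by
          refine mem_filter.mpr ⟨mem_range.mpr ?_, hp⟩
          exact Nat.lt_succ_of_le (le_trans (Nat.le_of_dvd (by omega) hpk) hk.2)
        have h1 : p ^ Nat.log p n ∣ P := Finset.dvd_prod_of_mem _ hmem
        have h2 : Nat.log p n ≤ P.factorization p :=
          (Nat.Prime.pow_dvd_iff_le_factorization hp hPpos.ne').mp h1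
        refine le_trans ?_ h2
        -- k.factorization p ≤ log p n
        have h3 : p ^ k.factorization p ∣ k := Nat.ordProj_dvd k p
        exact Nat.le_log_of_pow_le hp.one_lt
          (le_trans (Nat.le_of_dvd (by omega) h3) hk.2)
      · simp [Nat.factorization_eq_zero_of_not_dvd hpk]
    · simp [Nat.factorization_eq_zero_of_not_prime _ hp]
  have hLP : (Finset.Icc 1 n).lcm id ∣ P := Finset.lcm_dvd (fun k hk => hdvd k hk)
  have hL : (Finset.Icc 1 n).lcm id ≤ P := Nat.le_of_dvd hPpos hLP
  -- bound P
  set s := Nat.sqrt n with hs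
  have hsplit : P ≤ 4 ^ n * 4 ^ n := by
    have := Finset.prod_filter_mul_prod_filter_not
      ((range (n+1)).filter Nat.Prime) (fun p => p ≤ s) (fun p => p ^ Nat.log p n)
    rw [hP, ← this]
    gcongr ?_ * ?_
    · -- small primes: each factor ≤ n, count ≤ s
      calc ∏ p ∈ (((range (n+1)).filter Nat.Prime).filter (fun p => p ≤ s)),
            p ^ Nat.log p n
          ≤ ∏ _p ∈ (((range (n+1)).filter Nat.Prime).filter (fun p => p ≤ s)), n := by
            apply Finset.prod_le_prod (fun _ _ => Nat.zero_le _)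
            intro p hp
            exact Nat.pow_log_le_self p (by omega)
        _ = n ^ (((range (n+1)).filter Nat.Prime).filter (fun p => p ≤ s)).card := by
            rw [Finset.prod_const]
        _ ≤ n ^ s := by
            apply Nat.pow_le_pow_right (by omega)
            calc (((range (n+1)).filter Nat.Prime).filter (fun p => p ≤ s)).card
                ≤ (Finset.Icc 2 s).card := by
                  apply Finset.card_le_card
                  intro p hp
                  simp only [mem_filter, mem_range] at hp
                  exact mem_Icc.mpr ⟨hp.1.2.two_le, hp.2⟩
              _ ≤ s := by simp [Nat.card_Icc]
        _ ≤ (2 ^ (2 * s)) ^ s := by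
            apply Nat.pow_le_pow_left
            have h1 : n < (s + 1) ^ 2 := Nat.lt_succ_sqrt' n
            have h2 : s + 1 ≤ 2 ^ s := Nat.lt_two_pow_self (n := s)
            calc n ≤ (s + 1) ^ 2 := h1.le
              _ ≤ (2 ^ s) ^ 2 := Nat.pow_le_pow_left h2 2
              _ = 2 ^ (2 * s) := by rw [← pow_mul, Nat.mul_comm]
        _ ≤ 4 ^ n := by
            rw [← pow_mul]
            calc (2:ℕ) ^ (2 * s * s) ≤ 2 ^ (2 * n) := by
                  apply Nat.pow_le_pow_right (by norm_num)
                  have := Nat.sqrt_le' n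
                  nlinarith [Nat.sqrt_le' n]
              _ = 4 ^ n := by rw [pow_mul]; norm_num
    · -- large primes: log ≤ 1
      calc ∏ p ∈ (((range (n+1)).filter Nat.Prime).filter (fun p => ¬ p ≤ s)),
            p ^ Nat.log p n
          ≤ ∏ p ∈ (((range (n+1)).filter Nat.Prime).filter (fun p => ¬ p ≤ s)), p := by
            apply Finset.prod_le_prod (fun _ _ => Nat.zero_le _)
            intro p hp
            simp only [mem_filter, mem_range, not_le] at hp
            have hlog : Nat.log p n ≤ 1 := by
              by_contra h
              push_neg at h
              have hpn : p ^ 2 ≤ n := le_trans (Nat.pow_le_pow_right hp.1.2.pos h)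
                (Nat.pow_log_le_self p (by omega))
              have : p ≤ s := Nat.le_sqrt'.mpr (by nlinarith)
              omega
            calc p ^ Nat.log p n ≤ p ^ 1 := Nat.pow_le_pow_right hp.1.2.pos hlog
              _ = p := pow_one p
        _ ≤ ∏ p ∈ (range (n+1)).filter Nat.Prime, p :=
            Finset.prod_le_prod_of_subset_of_one_le' (Finset.filter_subset _ _)
              (fun p hp _ => (mem_filter.mp hp).2.one_lt.le)
        _ ≤ 4 ^ n := primorial_le_4_pow n
  calc (Finset.Icc 1 n).lcm id ≤ P := hL
    _ ≤ 4 ^ n * 4 ^ n := hsplit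
    _ = 16 ^ n := by rw [← mul_pow]; norm_num

theorem lcm_range_le_pow :
    ∃ C : ℝ, 0 < C ∧ ∀ n : ℕ, 1 ≤ n →
      (((Finset.Icc 1 n).lcm id : ℕ) : ℝ) ≤ C ^ n := by
  refine ⟨16, by norm_num, fun n hn => ?_⟩
  have := key n hn
  calc (((Finset.Icc 1 n).lcm id : ℕ) : ℝ) ≤ ((16 ^ n : ℕ) : ℝ) := by exact_mod_cast this
    _ = 16 ^ n := by push_cast; ring
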